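/- Let d ≥ 2 and suppose (i₁,j₁), (i₂,j₂), (i₃,j₃) are pairs of indices in {0,…,d} with i₁< j₁, i₂ < j₂, i₃ < j₃, and s₁, s₂, s₃ ∈ {+1, −1} are signs such that s₁ k_{i₁ j₁} + s₂ k_{i₂ j₂} + s₃ k_{i₃ j₃} = 0 in ℝ^{d+1}. Then there exist indices a < b < c in {0,…,d} such that the multiset of unordered pairs {{i₁,j₁}, {i₂,j₂}, {i₃,j₃}} equals {{a,b}, {b,c}, {a,c}}; i.e., the three edges form a triangle. -/

import Mathlib

noncomputable section

/-- The simplex root `k_{ij} = (eᵢ − eⱼ)/√2` in `ℝ^{d+1}`. -/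
def simplexRoot (d : ℕ) (i j : Fin (d + 1)) : Fin (d + 1) → ℝ :=
  (Real.sqrt 2)⁻¹ • (Pi.single i 1 - Pi.single j 1)

lemma ms_swap12 {α : Type*} (A B C : α) : ({A, B, C} : Multiset α) = {B, A, C} := by
  simp only [Multiset.insert_eq_cons]
  exact Multiset.cons_swap A B {C}

lemma ms_swap23 {α : Type*} (A B C : α) : ({A, B, C} : Multiset α) = {A, C, B} := by
  simp only [Multiset.insert_eq_cons]
  exact congrArg (A ::ₘ ·) (Multiset.cons_swap B C 0)

lemma ms_rot {α : Type*} (A B C : α) : ({A, B, C} : Multiset α) = {B, C, A} :=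
  (ms_swap12 A B C).trans (ms_swap23 B A C)

lemma ms_swap13 {α : Type*} (A B C : α) : ({A, B, C} : Multiset α) = {C, B, A} :=
  ((ms_rot A B C).trans (ms_rot B C A)).trans (ms_swap23 C A B)

lemma finish {n : ℕ} (p q r : Fin n) (hpq : p ≠ q) (hpr : p ≠ r) (hqr : q ≠ r)
    (M : Multiset (Finset (Fin n)))
    (hM : M = { ({p, q} : Finset (Fin n)), {p, r}, {q, r} }) :
    ∃ a b c : Fin n, a < b ∧ b < c ∧ M = { {a, b}, {b, c}, {a, c} } := by
  subst hM
  rcases lt_or_gt_of_ne hpq with h1 | h1 <;> rcases lt_or_gt_of_ne hpr with h2 | h2 <;>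
    rcases lt_or_gt_of_ne hqr with h3 | h3
  · exact ⟨p, q, r, h1, h3, ms_swap23 _ _ _⟩
  · refine ⟨p, r, q, h2, h3, ?_⟩
    rw [ms_swap12, Finset.pair_comm q r]
    exact ms_swap23 _ _ _
  · refine ⟨r, p, q, h2, h1, ?_⟩
    rw [Finset.pair_comm p r, Finset.pair_comm q r, ms_swap23, ms_swap12]
    exact ms_swap13 _ _ _
  · refine ⟨r, p, q, h2, h1, ?_⟩
    rw [Finset.pair_comm p r, Finset.pair_comm q r, ms_swap23, ms_swap12]
    exact ms_swap13 _ _ _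
  · refine ⟨q, p, r, h1, h2, ?_⟩
    rw [Finset.pair_comm p q]
  · exact absurd (h3.trans (lt_trans h1 h2)) (lt_irrefl r)
  · refine ⟨q, r, p, h3, h2, ?_⟩
    rw [Finset.pair_comm p q, Finset.pair_comm p r, ms_swap12, ms_swap23, ms_swap12]
  · refine ⟨r, q, p, h3, h1, ?_⟩
    rw [Finset.pair_comm p q, Finset.pair_comm p r, Finset.pair_comm q r, ms_swap12, ms_swap23]
    exact ms_rot _ _ _

/-- Fourier selection: if a signed combination of three simplex roots (with signs `±1`)
vanishes, then the three edges form a triangle `{a,b}, {b,c}, {a,c}` with `a < b < c`. -/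
theorem simplex_triangle_selection (d : ℕ) (hd : 2 ≤ d)
    (i₁ j₁ i₂ j₂ i₃ j₃ : Fin (d + 1))
    (h1 : i₁ < j₁) (h2 : i₂ < j₂) (h3 : i₃ < j₃)
    (s₁ s₂ s₃ : ℝ)
    (hs₁ : s₁ = 1 ∨ s₁ = -1) (hs₂ : s₂ = 1 ∨ s₂ = -1) (hs₃ : s₃ = 1 ∨ s₃ = -1)
    (hsum : s₁ • simplexRoot d i₁ j₁ + s₂ • simplexRoot d i₂ j₂ + s₃ • simplexRoot d i₃ j₃
      = 0) :
    ∃ a b c : Fin (d + 1), a < b ∧ b < c ∧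
      ({ {i₁, j₁}, {i₂, j₂}, {i₃, j₃} } : Multiset (Finset (Fin (d + 1)))) =
        { {a, b}, {b, c}, {a, c} } := by
  have key : ∀ x, s₁ * ((if x = i₁ then (1:ℝ) else 0) - (if x = j₁ then 1 else 0))
       + s₂ * ((if x = i₂ then (1:ℝ) else 0) - (if x = j₂ then 1 else 0))
       + s₃ * ((if x = i₃ then (1:ℝ) else 0) - (if x = j₃ then 1 else 0)) = 0 := by
    intro x
    have h := congrFun hsum x
    simp only [simplexRoot, Pi.add_apply, Pi.smul_apply, Pi.sub_apply, Pi.single_apply,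
      smul_eq_mul, Pi.zero_apply] at h
    have h2 : (Real.sqrt 2)⁻¹ ≠ 0 := by positivity
    have h4 : (Real.sqrt 2)⁻¹ * (s₁ * ((if x = i₁ then (1:ℝ) else 0) - (if x = j₁ then 1 else 0))
       + s₂ * ((if x = i₂ then (1:ℝ) else 0) - (if x = j₂ then 1 else 0))
       + s₃ * ((if x = i₃ then (1:ℝ) else 0) - (if x = j₃ then 1 else 0))) = 0 := by
      linear_combination h
    exact (mul_eq_zero.mp h4).resolve_left h2
  clear hsum
  rcases eq_or_ne i₂ i₁ with rfl | h21
  · -- i₂ = i₁  (note: subst replaces i₁ by i₂ or i₂ by i₁; we used rfl so i₂ ≡ i₁ merged)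
    rcases eq_or_ne j₂ j₁ with rfl | h22
    · -- E2 = E1 : contradiction
      exfalso
      rcases eq_or_ne i₃ i₂ with rfl | n1
      · rcases eq_or_ne j₃ j₂ with rfl | n2
        · have hk := key i₃
          rcases hs₁ with rfl | rfl <;> rcases hs₂ with rfl | rfl <;>
            rcases hs₃ with rfl | rfl <;> norm_num [h3.ne] at hk
        · have hk := key j₃
          have f1 : j₃ ≠ i₃ := h3.ne'
          rcases hs₁ with rfl | rfl <;> rcases hs₂ with rfl | rfl <;>
            rcases hs₃ with rfl | rfl <;> norm_num [f1, n2] at hk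
      · rcases eq_or_ne i₃ j₂ with rfl | n2
        · have hk := key j₃
          have f1 : j₃ ≠ i₂ := (h2.trans h3).ne'
          have f2 : j₃ ≠ i₃ := h3.ne'
          rcases hs₁ with rfl | rfl <;> rcases hs₂ with rfl | rfl <;>
            rcases hs₃ with rfl | rfl <;> norm_num [f1, f2] at hk
        · have hk := key i₃
          rcases hs₁ with rfl | rfl <;> rcases hs₂ with rfl | rfl <;>
            rcases hs₃ with rfl | rfl <;> norm_num [n1, n2, h3.ne] at hk
    · -- E1, E2 share exactly the bottom vertex i₂ ; edges (i₂,j₁), (i₂,j₂)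
      have f0 : j₁ ≠ i₂ := h1.ne'
      have f1 : j₁ ≠ j₂ := Ne.symm h22
      have f2 : j₂ ≠ i₂ := h2.ne'
      have m1 : j₁ = i₃ ∨ j₁ = j₃ := by
        by_contra hc
        push_neg at hc
        have hk := key j₁
        rcases hs₁ with rfl | rfl <;> rcases hs₂ with rfl | rfl <;>
          rcases hs₃ with rfl | rfl <;> norm_num [f0, f1, hc.1, hc.2] at hk
      have m2 : j₂ = i₃ ∨ j₂ = j₃ := by
        by_contra hc
        push_neg at hc
        have hk := key j₂
        rcases hs₁ with rfl | rfl <;> rcases hs₂ with rfl | rfl <;>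
          rcases hs₃ with rfl | rfl <;> norm_num [f2, h22, hc.1, hc.2] at hk
      rcases m1 with e1 | e1 <;> rcases m2 with e2 | e2
      · exact absurd (e1.trans e2.symm) (Ne.symm h22)
      · refine finish i₂ j₁ j₂ h1.ne h2.ne (Ne.symm h22) _ ?_
        rw [← e1, ← e2]
      · refine finish i₂ j₁ j₂ h1.ne h2.ne (Ne.symm h22) _ ?_
        rw [Finset.pair_comm i₃ j₃, ← e1, ← e2]
      · exact absurd (e1.trans e2.symm) (Ne.symm h22)
  · rcases eq_or_ne i₂ j₁ with rfl | hb2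
    · -- i₂ = j₁ : path i₁ < i₂ < j₂, third edge must be {i₁, j₂}
      have f0 : i₁ ≠ i₂ := h1.ne
      have f1 : i₁ ≠ j₂ := (h1.trans h2).ne
      have f2 : j₂ ≠ i₁ := (h1.trans h2).ne'
      have f3 : j₂ ≠ i₂ := h2.ne'
      have m1 : i₁ = i₃ ∨ i₁ = j₃ := by
        by_contra hc
        push_neg at hc
        have hk := key i₁
        rcases hs₁ with rfl | rfl <;> rcases hs₂ with rfl | rfl <;>
          rcases hs₃ with rfl | rfl <;> norm_num [f0, f1, hc.1, hc.2] at hk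
      have m2 : j₂ = i₃ ∨ j₂ = j₃ := by
        by_contra hc
        push_neg at hc
        have hk := key j₂
        rcases hs₁ with rfl | rfl <;> rcases hs₂ with rfl | rfl <;>
          rcases hs₃ with rfl | rfl <;> norm_num [f2, f3, hc.1, hc.2] at hk
      rcases m1 with e1 | e1 <;> rcases m2 with e2 | e2
      · exact absurd (e1.trans e2.symm) f1
      · -- i₃ = i₁, j₃ = j₂ : edges (i₁,i₂),(i₂,j₂),(i₁,j₂)
        refine finish i₁ i₂ j₂ h1.ne f1 h2.ne _ ?_
        rw [← e1, ← e2]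
        exact ms_swap23 _ _ _
      · -- i₁ = j₃ and j₂ = i₃ : contradicts i₃ < j₃
        exfalso
        rw [← e1, ← e2] at h3
        exact absurd (h3.trans (h1.trans h2)) (lt_irrefl j₂)
      · exact absurd (e1.trans e2.symm) f1
    · rcases eq_or_ne j₂ j₁ with rfl | hb3
      · -- j₂ = j₁ (call it j₂ after merge): edges (i₁,j₂),(i₂,j₂), third must be {i₁,i₂}
        have f0 : i₁ ≠ j₂ := h1.ne
        have f1 : i₁ ≠ i₂ := Ne.symm h21
        have f2 : i₂ ≠ j₂ := h2.ne
        have m1 : i₁ = i₃ ∨ i₁ = j₃ := by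
          by_contra hc
          push_neg at hc
          have hk := key i₁
          rcases hs₁ with rfl | rfl <;> rcases hs₂ with rfl | rfl <;>
            rcases hs₃ with rfl | rfl <;> norm_num [f0, f1, hc.1, hc.2] at hk
        have m2 : i₂ = i₃ ∨ i₂ = j₃ := by
          by_contra hc
          push_neg at hc
          have hk := key i₂
          rcases hs₁ with rfl | rfl <;> rcases hs₂ with rfl | rfl <;>
            rcases hs₃ with rfl | rfl <;> norm_num [h21, f2, hc.1, hc.2] at hk
        rcases m1 with e1 | e1 <;> rcases m2 with e2 | e2
        · exact absurd (e1.trans e2.symm) f1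
        · -- i₃ = i₁, j₃ = i₂
          refine finish j₂ i₁ i₂ h1.ne' h2.ne' f1 _ ?_
          rw [← e1, ← e2, Finset.pair_comm i₁ j₂, Finset.pair_comm i₂ j₂]
        · -- i₃ = i₂, j₃ = i₁
          refine finish j₂ i₁ i₂ h1.ne' h2.ne' f1 _ ?_
          rw [Finset.pair_comm i₃ j₃, ← e1, ← e2, Finset.pair_comm i₁ j₂,
            Finset.pair_comm i₂ j₂]
        · exact absurd (e1.trans e2.symm) f1
      · rcases eq_or_ne j₂ i₁ with rfl | hb4
        · -- j₂ = i₁ : i₂ < j₂ < j₁, third edge must be {i₂, j₁}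
          have f0 : j₁ ≠ j₂ := h1.ne'
          have f1 : j₁ ≠ i₂ := (h2.trans h1).ne'
          have f2 : i₂ ≠ j₁ := (h2.trans h1).ne
          have m1 : j₁ = i₃ ∨ j₁ = j₃ := by
            by_contra hc
            push_neg at hc
            have hk := key j₁
            rcases hs₁ with rfl | rfl <;> rcases hs₂ with rfl | rfl <;>
              rcases hs₃ with rfl | rfl <;> norm_num [f0, f1, hc.1, hc.2] at hk
          have m2 : i₂ = i₃ ∨ i₂ = j₃ := by
            by_contra hc
            push_neg at hc
            have hk := key i₂
            rcases hs₁ with rfl | rfl <;> rcases hs₂ with rfl | rfl <;>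
              rcases hs₃ with rfl | rfl <;> norm_num [h21, f2, h2.ne, hc.1, hc.2] at hk
          rcases m1 with e1 | e1 <;> rcases m2 with e2 | e2
          · exact absurd (e2.trans e1.symm) f2
          · -- i₃ = j₁, j₃ = i₂ : contradicts i₃ < j₃ since i₂ < j₁
            exfalso
            rw [← e1, ← e2] at h3
            exact absurd (h3.trans (h2.trans h1)) (lt_irrefl j₁)
          · -- i₃ = i₂, j₃ = j₁ : edges (j₂,j₁),(i₂,j₂),(i₂,j₁)
            refine finish j₂ j₁ i₂ h1.ne (Ne.symm h2.ne) f1 _ ?_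
            rw [← e1, ← e2, Finset.pair_comm i₂ j₂, Finset.pair_comm i₂ j₁]
          · exact absurd (e2.trans e1.symm) f2
        · -- E2 disjoint from E1 : contradiction
          exfalso
          have f0 : i₁ ≠ j₁ := h1.ne
          have f1 : i₁ ≠ i₂ := Ne.symm h21
          have f2 : i₁ ≠ j₂ := Ne.symm hb4
          have f3 : j₁ ≠ i₁ := h1.ne'
          have f4 : j₁ ≠ i₂ := Ne.symm hb2
          have f5 : j₁ ≠ j₂ := Ne.symm hb3
          have m1 : i₁ = i₃ ∨ i₁ = j₃ := by
            by_contra hc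
            push_neg at hc
            have hk := key i₁
            rcases hs₁ with rfl | rfl <;> rcases hs₂ with rfl | rfl <;>
              rcases hs₃ with rfl | rfl <;> norm_num [f0, f1, f2, hc.1, hc.2] at hk
          have m2 : j₁ = i₃ ∨ j₁ = j₃ := by
            by_contra hc
            push_neg at hc
            have hk := key j₁
            rcases hs₁ with rfl | rfl <;> rcases hs₂ with rfl | rfl <;>
              rcases hs₃ with rfl | rfl <;> norm_num [f3, f4, f5, hc.1, hc.2] at hk
          rcases m1 with e1 | e1 <;> rcases m2 with e2 | e2
          · exact absurd (e1.trans e2.symm) f0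
          · -- E3 = E1 : then key i₂ gives s₂ = 0
            have g1 : i₂ ≠ i₃ := fun h => h21 (h.trans e1.symm)
            have g2 : i₂ ≠ j₃ := fun h => hb2 (h.trans e2.symm)
            have hk := key i₂
            rcases hs₁ with rfl | rfl <;> rcases hs₂ with rfl | rfl <;>
              rcases hs₃ with rfl | rfl <;> norm_num [h21, hb2, h2.ne, g1, g2] at hk
          · -- i₁ = j₃, j₁ = i₃ : contradicts orders
            rw [← e1, ← e2] at h3
            exact absurd (h3.trans h1) (lt_irrefl j₁)
          · exact absurd (e1.trans e2.symm) f0
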